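/- Under the convex-body generative model where z_x is uniform on a convex body Z_c, p(z_t|z_x) = C_p(z_x)^{-1} exp(−δ(z_t, z_x)/λ), and the inference conditional is q_h(z_t|z_x) = C_q(z_x)^{-1} exp(−δ(h(z_t), h(z_x))/τ): if p(z_t|z_x) = q_h(z_t|z_x) for all z_x, z_t in Z_c, then C_p(z_x) = C_q(z_x) for all z_x, and δ(z_x, z_t) = (λ/τ)·δ(h(z_x), h(z_t)) for all z_x, z_t ∈ Z_c. -/
import Mathlib


/-- Matching conditionals on a convex body: if the generative conditional
`C_p(z_x)⁻¹ exp (−δ(z_t, z_x)/λ)` equals the inference conditional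
`C_q(z_x)⁻¹ exp (−δ(h z_t, h z_x)/τ)` for all points of a convex body `Z_c`, where `δ`
is a metric induced by a norm, then the normalizers agree on `Z_c`, and
`δ(z_x, z_t) = (λ/τ) δ(h z_x, h z_t)` on `Z_c` (so `h` is a scaled isometry). -/
theorem stmt13 {M : ℕ} (lam τ : ℝ) (hlam : 0 < lam) (hτ : 0 < τ)
    (Zc : Set (EuclideanSpace ℝ (Fin M)))
    (hcomp : IsCompact Zc) (hconv : Convex ℝ Zc) (hint : (interior Zc).Nonempty)
    -- a metric `δ` induced by a norm `s`
    (s : Seminorm ℝ (EuclideanSpace ℝ (Fin M))) (hs : ∀ x, s x = 0 → x = 0)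
    (δ : EuclideanSpace ℝ (Fin M) → EuclideanSpace ℝ (Fin M) → ℝ)
    (hδ : ∀ x y, δ x y = s (x - y))
    (h : EuclideanSpace ℝ (Fin M) → EuclideanSpace ℝ (Fin M))
    (Cp Cq : EuclideanSpace ℝ (Fin M) → ℝ)
    (hCp : ∀ zx ∈ Zc, 0 < Cp zx) (hCq : ∀ zx ∈ Zc, 0 < Cq zx)
    (heq : ∀ zx ∈ Zc, ∀ zt ∈ Zc,
      (Cp zx)⁻¹ * Real.exp (-(δ zt zx) / lam)
        = (Cq zx)⁻¹ * Real.exp (-(δ (h zt) (h zx)) / τ)) :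
    (∀ zx ∈ Zc, Cp zx = Cq zx) ∧
    (∀ zx ∈ Zc, ∀ zt ∈ Zc, δ zx zt = (lam / τ) * δ (h zx) (h zt)) := by
  have hdiag : ∀ z, δ z z = 0 := by
    intro z
    rw [hδ, sub_self, map_zero]
  have hCpq : ∀ zx ∈ Zc, Cp zx = Cq zx := by
    intro zx hzx
    have := heq zx hzx zx hzx
    rw [hdiag, hdiag, neg_zero, zero_div, zero_div, Real.exp_zero, mul_one, mul_one] at this
    exact (inv_injective this).symm ▸ rfl
  refine ⟨hCpq, ?_⟩
  intro zx hzx zt hzt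
  have := heq zt hzt zx hzx
  rw [hCpq zt hzt] at this
  have hne : (Cq zt)⁻¹ ≠ 0 := inv_ne_zero (hCq zt hzt).ne'
  have hexp : Real.exp (-(δ zx zt) / lam) = Real.exp (-(δ (h zx) (h zt)) / τ) :=
    mul_left_cancel₀ hne this
  have := Real.exp_injective hexp
  field_simp at this ⊢
  linarith
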